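/- Let C = ⊕_{g∈G} C_g be a G-graded coalgebra and let M be a G-graded right C-comodule. Then the map ρ'(m) = Σ m₀ ⊗ (m₁ ⋊ δ(m)⁻¹) for homogeneous m of degree δ(m), where ρ(m) = Σ m₀ ⊗ m₁ with homogeneous terms, makes M into a right comodule over the smash coproduct coalgebra C ⋊ kG. -/

import Mathlib

open TensorProduct DirectSum

noncomputable section
open scoped Classical

variable (k : Type*) [Field k] (G : Type*) [Group G]
variable (C : Type*) [AddCommGroup C] [Module k C]

/-- The group coalgebra `kG`: the free module on `G`, with group-like basis. -/
abbrev kGrp : Type _ := G →₀ k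

/-- Comultiplication of `kG`: every `g ∈ G` is group-like. -/
def deltaKG : kGrp k G →ₗ[k] kGrp k G ⊗[k] kGrp k G :=
  Finsupp.lsum k fun g =>
    LinearMap.toSpanSingleton k _
      ((Finsupp.single g 1 : kGrp k G) ⊗ₜ[k] (Finsupp.single g 1 : kGrp k G))

/-- Counit of `kG`. -/
def epsKG : kGrp k G →ₗ[k] k := Finsupp.lsum k fun _ => LinearMap.id

/-- Right multiplication by the group element `h` on `kG`. -/
def mulKG (h : G) : kGrp k G →ₗ[k] kGrp k G :=
  Finsupp.lsum k fun g => Finsupp.lsingle (g * h)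

/-- The map `C → C ⊗ kG`, `c ↦ c ⊗ g`. -/
def tmulKG (g : G) : C →ₗ[k] C ⊗[k] kGrp k G :=
  (TensorProduct.mk k C (kGrp k G)).flip (Finsupp.single g 1)

variable (ℭ : G → Submodule k C) [Decomposition ℭ]

/-- The comodule structure map `ρ : C → C ⊗ kG` encoding the grading:
`ρ(c) = c ⊗ δ(c)` for `c` homogeneous of degree `δ(c)`. -/
def rhoC : C →ₗ[k] C ⊗[k] kGrp k G :=
  (DirectSum.toModule k G (C ⊗[k] kGrp k G) fun g =>
      (tmulKG k G C g).comp (ℭ g).subtype).comp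
    (DirectSum.decomposeLinearEquiv ℭ).toLinearMap

/-- The value of the smash comultiplication in degree `g`:
`c ↦ Σ (c₁ ⋊ δ(c₂)g) ⊗ (c₂ ⋊ g)`, for a comultiplication `Δc` on `C`. -/
def smashDg (Δc : C →ₗ[k] C ⊗[k] C) (g : G) :
    C →ₗ[k] (C ⊗[k] kGrp k G) ⊗[k] (C ⊗[k] kGrp k G) :=
  (TensorProduct.map
      (TensorProduct.map LinearMap.id (mulKG k G g))
      (tmulKG k G C g)).comp
    (((TensorProduct.assoc k C (kGrp k G) C).symm.toLinearMap).comp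
      ((TensorProduct.map LinearMap.id (TensorProduct.comm k C (kGrp k G)).toLinearMap).comp
        ((TensorProduct.map LinearMap.id (rhoC k G C ℭ)).comp Δc)))

/-- The comultiplication of the smash coproduct coalgebra `C ⋊ kG`:
`Δ(c ⋊ g) = Σ (c₁ ⋊ δ(c₂)g) ⊗ (c₂ ⋊ g)` for homogeneous `c`. -/
def smashDeltaC (Δc : C →ₗ[k] C ⊗[k] C) :
    C ⊗[k] kGrp k G →ₗ[k] (C ⊗[k] kGrp k G) ⊗[k] (C ⊗[k] kGrp k G) :=
  (Finsupp.lsum k fun g => smashDg k G C ℭ Δc g).comp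
    (TensorProduct.finsuppScalarRight k k C G).toLinearMap

/-- The counit of `C ⋊ kG`: `ε(c ⋊ g) = ε_C(c)`. -/
def smashEpsC (εc : C →ₗ[k] k) : C ⊗[k] kGrp k G →ₗ[k] k :=
  (TensorProduct.lid k k).toLinearMap.comp (TensorProduct.map εc (epsKG k G))

/-- The canonical projection `F : C ⋊ kG → C`, `c ⋊ g ↦ c`. -/
def smashProjC : C ⊗[k] kGrp k G →ₗ[k] C :=
  (TensorProduct.rid k C).toLinearMap.comp (TensorProduct.map LinearMap.id (epsKG k G))

/-- The span of elementary tensors from two submodules: the image of `A ⊗ B`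
in `M ⊗ N`. -/
def tsub {M N : Type*} [AddCommGroup M] [Module k M] [AddCommGroup N] [Module k N]
    (A : Submodule k M) (B : Submodule k N) : Submodule k (M ⊗[k] N) :=
  Submodule.span k {x | ∃ a ∈ A, ∃ b ∈ B, x = a ⊗ₜ[k] b}

variable (M : Type*) [AddCommGroup M] [Module k M]
variable (ℳ : G → Submodule k M) [Decomposition ℳ]

/-- The structure map `ρ' : M → M ⊗ (C ⋊ kG)`,
`ρ'(m) = Σ m₀ ⊗ (m₁ ⋊ δ(m)⁻¹)` for `m` homogeneous of degree `δ(m)`. -/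
def rhoSmash (ρM : M →ₗ[k] M ⊗[k] C) : M →ₗ[k] M ⊗[k] (C ⊗[k] kGrp k G) :=
  (DirectSum.toModule k G (M ⊗[k] (C ⊗[k] kGrp k G)) fun d =>
      ((TensorProduct.map LinearMap.id (tmulKG k G C d⁻¹)).comp ρM).comp (ℳ d).subtype).comp
    (DirectSum.decomposeLinearEquiv ℳ).toLinearMap

section Aux

lemma tmulKG_apply (g : G) (c : C) :
    tmulKG k G C g c = c ⊗ₜ[k] (Finsupp.single g 1 : kGrp k G) := rfl

lemma mulKG_single (h g : G) :
    mulKG k G h (Finsupp.single g 1 : kGrp k G) = Finsupp.single (g * h) 1 := by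
  simp [mulKG]

lemma epsKG_single (g : G) : epsKG k G (Finsupp.single g 1 : kGrp k G) = 1 := by
  simp [epsKG]

lemma rhoC_of_mem {g : G} {c : C} (hc : c ∈ ℭ g) :
    rhoC k G C ℭ c = c ⊗ₜ[k] (Finsupp.single g 1 : kGrp k G) := by
  unfold rhoC
  simp only [LinearMap.comp_apply, LinearEquiv.coe_coe, DirectSum.decomposeLinearEquiv_apply,
    DirectSum.decompose_of_mem ℭ hc, ← DirectSum.lof_eq_of k, DirectSum.toModule_lof]
  rfl

lemma rhoSmash_of_mem (ρM : M →ₗ[k] M ⊗[k] C) {g : G} {m : M} (hm : m ∈ ℳ g) :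
    rhoSmash k G C M ℳ ρM m
      = (TensorProduct.map LinearMap.id (tmulKG k G C g⁻¹)) (ρM m) := by
  unfold rhoSmash
  simp only [LinearMap.comp_apply, LinearEquiv.coe_coe, DirectSum.decomposeLinearEquiv_apply,
    DirectSum.decompose_of_mem ℳ hm, ← DirectSum.lof_eq_of k, DirectSum.toModule_lof]
  rfl

lemma smashDeltaC_tmul_single (Δc : C →ₗ[k] C ⊗[k] C) (c : C) (h : G) :
    smashDeltaC k G C ℭ Δc (c ⊗ₜ[k] (Finsupp.single h 1 : kGrp k G))
      = smashDg k G C ℭ Δc h c := by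
  unfold smashDeltaC
  simp [TensorProduct.finsuppScalarRight_apply_tmul, Finsupp.sum_single_index]

lemma smashEpsC_tmul_single (εc : C →ₗ[k] k) (c : C) (h : G) :
    smashEpsC k G C εc (c ⊗ₜ[k] (Finsupp.single h 1 : kGrp k G)) = εc c := by
  simp [smashEpsC, epsKG]

end Aux

/-- If `M` is a `G`-graded right comodule over a `G`-graded
coalgebra `C`, then `ρ'(m) = Σ m₀ ⊗ (m₁ ⋊ δ(m)⁻¹)` (for homogeneous `m` of
degree `δ(m)`) makes `M` a right comodule over the smash coproduct `C ⋊ kG`. -/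
theorem graded_comodule_is_smash_comodule
    (Δc : C →ₗ[k] C ⊗[k] C) (εc : C →ₗ[k] k)
    -- `C` is a coassociative counital coalgebra
    (hcoassoc : ∀ c : C,
      (TensorProduct.assoc k C C C) ((TensorProduct.map Δc LinearMap.id) (Δc c))
        = (TensorProduct.map LinearMap.id Δc) (Δc c))
    (hcl : ∀ c : C, (TensorProduct.lid k C) ((TensorProduct.map εc LinearMap.id) (Δc c)) = c)
    (hcr : ∀ c : C, (TensorProduct.rid k C) ((TensorProduct.map LinearMap.id εc) (Δc c)) = c)
    -- the decomposition `C = ⊕_g C_g` is a coalgebra grading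
    (hgradeΔ : ∀ g : G, ∀ c ∈ ℭ g,
      Δc c ∈ ⨆ (ab : G × G) (_ : ab.1 * ab.2 = g), tsub k (ℭ ab.1) (ℭ ab.2))
    (hgradeε : ∀ g : G, g ≠ 1 → ∀ c ∈ ℭ g, εc c = 0)
    -- `M` is a right `C`-comodule
    (ρM : M →ₗ[k] M ⊗[k] C)
    (hρcoassoc : ∀ m : M,
      (TensorProduct.map LinearMap.id Δc) (ρM m)
        = (TensorProduct.assoc k M C C) ((TensorProduct.map ρM LinearMap.id) (ρM m)))
    (hρcounit : ∀ m : M,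
      (TensorProduct.rid k M) ((TensorProduct.map LinearMap.id εc) (ρM m)) = m)
    -- the comodule is graded: `ρ(M_g) ⊆ Σ_{ab=g} M_a ⊗ C_b`
    (hρgrade : ∀ g : G, ∀ m ∈ ℳ g,
      ρM m ∈ ⨆ (ab : G × G) (_ : ab.1 * ab.2 = g), tsub k (ℳ ab.1) (ℭ ab.2)) :
    -- `ρ'` is coassociative over `C ⋊ kG` ...
    (∀ m : M,
      (TensorProduct.map LinearMap.id (smashDeltaC k G C ℭ Δc))
          (rhoSmash k G C M ℳ ρM m)
        = (TensorProduct.assoc k M (C ⊗[k] kGrp k G) (C ⊗[k] kGrp k G))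
            ((TensorProduct.map (rhoSmash k G C M ℳ ρM) LinearMap.id)
              (rhoSmash k G C M ℳ ρM m)))
    -- ... and counital
    ∧ (∀ m : M,
        (TensorProduct.rid k M)
          ((TensorProduct.map LinearMap.id (smashEpsC k G C εc))
            (rhoSmash k G C M ℳ ρM m)) = m) := by
  
  have hM : (⨆ g, ℳ g) = ⊤ :=
    (DirectSum.Decomposition.isInternal ℳ).submodule_iSup_eq_top
  constructor
  · -- coassociativity
    have key : ∀ g : G, ∀ m ∈ ℳ g,
        (TensorProduct.map LinearMap.id (smashDeltaC k G C ℭ Δc))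
            (rhoSmash k G C M ℳ ρM m)
          = (TensorProduct.assoc k M (C ⊗[k] kGrp k G) (C ⊗[k] kGrp k G))
              ((TensorProduct.map (rhoSmash k G C M ℳ ρM) LinearMap.id)
                (rhoSmash k G C M ℳ ρM m)) := by
      intro g m hm
      rw [rhoSmash_of_mem k G C M ℳ ρM hm]
      set F : C ⊗[k] C →ₗ[k] (C ⊗[k] kGrp k G) ⊗[k] (C ⊗[k] kGrp k G) :=
        (TensorProduct.map
            (TensorProduct.map LinearMap.id (mulKG k G g⁻¹))
            (tmulKG k G C g⁻¹)).comp
          (((TensorProduct.assoc k C (kGrp k G) C).symm.toLinearMap).comp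
            ((TensorProduct.map LinearMap.id
                (TensorProduct.comm k C (kGrp k G)).toLinearMap).comp
              (TensorProduct.map LinearMap.id (rhoC k G C ℭ)))) with hF
      have hDg : smashDg k G C ℭ Δc g⁻¹ = F.comp Δc := rfl
      have hcomp : (smashDeltaC k G C ℭ Δc).comp (tmulKG k G C g⁻¹) = F.comp Δc := by
        ext c
        simp only [LinearMap.comp_apply, tmulKG_apply]
        rw [smashDeltaC_tmul_single, hDg]
        rfl
      have e1 : (TensorProduct.map (LinearMap.id : M →ₗ[k] M) (smashDeltaC k G C ℭ Δc)).comp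
            (TensorProduct.map LinearMap.id (tmulKG k G C g⁻¹))
          = (TensorProduct.map LinearMap.id F).comp
            (TensorProduct.map LinearMap.id Δc) := by
        rw [← TensorProduct.map_comp, ← TensorProduct.map_comp, hcomp]
      -- both sides as linear maps of `ρM m`
      set L2 : M ⊗[k] C →ₗ[k] M ⊗[k] ((C ⊗[k] kGrp k G) ⊗[k] (C ⊗[k] kGrp k G)) :=
        (TensorProduct.map LinearMap.id F).comp
          ((TensorProduct.assoc k M C C).toLinearMap.comp
            (TensorProduct.map ρM LinearMap.id)) with hL2
      set R2 : M ⊗[k] C →ₗ[k] M ⊗[k] ((C ⊗[k] kGrp k G) ⊗[k] (C ⊗[k] kGrp k G)) :=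
        (TensorProduct.assoc k M (C ⊗[k] kGrp k G) (C ⊗[k] kGrp k G)).toLinearMap.comp
          ((TensorProduct.map (rhoSmash k G C M ℳ ρM) LinearMap.id).comp
            (TensorProduct.map LinearMap.id (tmulKG k G C g⁻¹))) with hR2
      have hle : (⨆ (ab : G × G) (_ : ab.1 * ab.2 = g), tsub k (ℳ ab.1) (ℭ ab.2))
          ≤ LinearMap.eqLocus L2 R2 := by
        refine iSup_le fun ab => iSup_le fun hab => Submodule.span_le.mpr ?_
        rintro _ ⟨x, hx, y, hy, rfl⟩
        show L2 (x ⊗ₜ y) = R2 (x ⊗ₜ y)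
        have e2 : R2 (x ⊗ₜ[k] y) = (TensorProduct.assoc k M (C ⊗[k] kGrp k G) (C ⊗[k] kGrp k G))
            (((TensorProduct.map LinearMap.id (tmulKG k G C ab.1⁻¹)) (ρM x)) ⊗ₜ[k]
              (y ⊗ₜ[k] (Finsupp.single g⁻¹ 1 : kGrp k G))) := by
          simp only [hR2, LinearMap.comp_apply, TensorProduct.map_tmul, LinearMap.id_apply,
            tmulKG_apply, LinearEquiv.coe_coe]
          rw [rhoSmash_of_mem k G C M ℳ ρM hx]
        rw [e2]
        have h3 : ((TensorProduct.map (LinearMap.id : M →ₗ[k] M) F).comp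
              ((TensorProduct.assoc k M C C).toLinearMap.comp
                ((TensorProduct.mk k (M ⊗[k] C) C).flip y)))
            = ((TensorProduct.assoc k M (C ⊗[k] kGrp k G) (C ⊗[k] kGrp k G)).toLinearMap.comp
                (((TensorProduct.mk k (M ⊗[k] (C ⊗[k] kGrp k G)) (C ⊗[k] kGrp k G)).flip
                    (y ⊗ₜ[k] (Finsupp.single g⁻¹ 1 : kGrp k G))).comp
                  (TensorProduct.map LinearMap.id (tmulKG k G C ab.1⁻¹)))) := by
          apply TensorProduct.ext'
          intro u v
          have hbg : ab.2 * g⁻¹ = ab.1⁻¹ := by rw [← hab]; group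
          simp only [LinearMap.comp_apply, TensorProduct.mk_apply, LinearMap.flip_apply,
            TensorProduct.map_tmul, LinearMap.id_apply, LinearEquiv.coe_coe,
            TensorProduct.assoc_tmul, hF]
          rw [rhoC_of_mem k G C ℭ hy]
          simp only [tmulKG_apply, TensorProduct.comm_tmul, TensorProduct.assoc_symm_tmul,
            TensorProduct.map_tmul, LinearMap.id_apply, mulKG_single, hbg,
            LinearEquiv.coe_coe]
        have := LinearMap.congr_fun h3 (ρM x)
        simp only [LinearMap.comp_apply, TensorProduct.mk_apply, LinearMap.flip_apply,
          LinearEquiv.coe_coe] at this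
        simp only [hL2, LinearMap.comp_apply, TensorProduct.map_tmul, LinearMap.id_apply,
          LinearEquiv.coe_coe]
        exact this
      have hmem : ρM m ∈ LinearMap.eqLocus L2 R2 := hle (hρgrade g m hm)
      have hEq : L2 (ρM m) = R2 (ρM m) := hmem
      calc (TensorProduct.map LinearMap.id (smashDeltaC k G C ℭ Δc))
              ((TensorProduct.map LinearMap.id (tmulKG k G C g⁻¹)) (ρM m))
          = (TensorProduct.map LinearMap.id F)
              ((TensorProduct.map LinearMap.id Δc) (ρM m)) := by
            rw [← LinearMap.comp_apply, e1, LinearMap.comp_apply]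
        _ = (TensorProduct.map LinearMap.id F)
              ((TensorProduct.assoc k M C C)
                ((TensorProduct.map ρM LinearMap.id) (ρM m))) := by rw [hρcoassoc m]
        _ = L2 (ρM m) := rfl
        _ = R2 (ρM m) := hEq
        _ = _ := rfl
    intro m
    set L1 : M →ₗ[k] M ⊗[k] ((C ⊗[k] kGrp k G) ⊗[k] (C ⊗[k] kGrp k G)) :=
      (TensorProduct.map LinearMap.id (smashDeltaC k G C ℭ Δc)).comp
        (rhoSmash k G C M ℳ ρM) with hL1
    set R1 : M →ₗ[k] M ⊗[k] ((C ⊗[k] kGrp k G) ⊗[k] (C ⊗[k] kGrp k G)) :=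
      (TensorProduct.assoc k M (C ⊗[k] kGrp k G) (C ⊗[k] kGrp k G)).toLinearMap.comp
        ((TensorProduct.map (rhoSmash k G C M ℳ ρM) LinearMap.id).comp
          (rhoSmash k G C M ℳ ρM)) with hR1
    have htop : (⊤ : Submodule k M) ≤ LinearMap.eqLocus L1 R1 := by
      rw [← hM]
      exact iSup_le fun g m hm => key g m hm
    exact htop Submodule.mem_top
  · -- counit
    have key : ∀ g : G, ∀ m ∈ ℳ g,
        (TensorProduct.rid k M)
          ((TensorProduct.map LinearMap.id (smashEpsC k G C εc))
            (rhoSmash k G C M ℳ ρM m)) = m := by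
      intro g m hm
      rw [rhoSmash_of_mem k G C M ℳ ρM hm]
      have hcomp : (smashEpsC k G C εc).comp (tmulKG k G C g⁻¹) = εc := by
        ext c
        simp only [LinearMap.comp_apply, tmulKG_apply]
        exact smashEpsC_tmul_single k G C εc c g⁻¹
      have e1 : (TensorProduct.map (LinearMap.id : M →ₗ[k] M) (smashEpsC k G C εc)).comp
            (TensorProduct.map LinearMap.id (tmulKG k G C g⁻¹))
          = TensorProduct.map LinearMap.id εc := by
        rw [← TensorProduct.map_comp, hcomp, LinearMap.id_comp]
      rw [← LinearMap.comp_apply, e1]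
      exact hρcounit m
    intro m
    set L4 : M →ₗ[k] M :=
      (TensorProduct.rid k M).toLinearMap.comp
        ((TensorProduct.map LinearMap.id (smashEpsC k G C εc)).comp
          (rhoSmash k G C M ℳ ρM)) with hL4
    have htop : (⊤ : Submodule k M) ≤ LinearMap.eqLocus L4 (LinearMap.id) := by
      rw [← hM]
      exact iSup_le fun g m hm => key g m hm
    exact htop Submodule.mem_top
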